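/- Let {εⱼ} ⊂ (0,1) with c := inf_{j≥1}(1−εⱼ)(1−εⱼ₊₁) > 0, and define bⱼ, gⱼ as in the infinite band construction (b₀ = α₀−β₀, bⱼ = (1−εⱼ)bⱼ₋₁/2, gⱼ = εⱼbⱼ₋₁), with gap endpoints αⱼ = β₀ + bⱼ and βⱼ = αⱼ + gⱼ. Then for any γⱼ ∈ [αⱼ,βⱼ] and any x ≤ β_k, the finite product ∏_{j=1}^{k−1} |x−γⱼ|/√(|x−αⱼ||x−βⱼ|) ≤ exp((2/c)·Σ_{j=1}^{k−1} εⱼ). -/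

import Mathlib

open Finset

/-- Blaschke-type product estimate for the infinite band set: with bands/gaps defined by
`b₀ = α₀−β₀`, `bⱼ = (1−εⱼ)bⱼ₋₁/2`, `gⱼ = εⱼbⱼ₋₁` and gap endpoints `Aⱼ = β₀ + bⱼ`,
`Bⱼ = Aⱼ + gⱼ`, if `c := inf_{j≥1}(1−εⱼ)(1−εⱼ₊₁) > 0`, then for any `γⱼ ∈ [Aⱼ, Bⱼ]` and any
`x ≤ Bₖ`, `∏_{j=1}^{k−1} |x−γⱼ|/√(|x−Aⱼ||x−Bⱼ|) ≤ exp((2/c)·Σ_{j=1}^{k−1} εⱼ)`. -/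
theorem infinite_band_product_estimate (α₀ β₀ : ℝ) (ε b g A B γ : ℕ → ℝ) (c : ℝ)
    (hL : 0 < α₀ - β₀)
    (hε : ∀ j, ε j ∈ Set.Ioo (0 : ℝ) 1)
    (hb0 : b 0 = α₀ - β₀)
    (hb : ∀ j, 1 ≤ j → b j = (1 - ε j) / 2 * b (j - 1))
    (hg : ∀ j, 1 ≤ j → g j = ε j * b (j - 1))
    (hA : ∀ j, 1 ≤ j → A j = β₀ + b j)
    (hB : ∀ j, 1 ≤ j → B j = A j + g j)
    (hγ : ∀ j, 1 ≤ j → γ j ∈ Set.Icc (A j) (B j))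
    (hc : c = ⨅ j : ℕ, (1 - ε (j + 1)) * (1 - ε (j + 2)))
    (hc0 : 0 < c) :
    ∀ k : ℕ, 1 ≤ k → ∀ x : ℝ, x ≤ B k →
      ∏ j ∈ Finset.Icc 1 (k - 1), |x - γ j| / Real.sqrt (|x - A j| * |x - B j|) ≤
        Real.exp (2 / c * ∑ j ∈ Finset.Icc 1 (k - 1), ε j) := by

  have hε0 : ∀ j, (0:ℝ) < ε j := fun j => (hε j).1
  have hε1 : ∀ j, ε j < 1 := fun j => (hε j).2
  have hbpos : ∀ j, 0 < b j := by
    intro j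
    induction j with
    | zero => rw [hb0]; exact hL
    | succ n ih =>
      rw [hb (n + 1) (by omega)]
      simp only [Nat.add_sub_cancel]
      have h1 : 0 < 1 - ε (n + 1) := by linarith [hε1 (n + 1)]
      positivity
  have hgpos : ∀ j, 1 ≤ j → 0 < g j := by
    intro j hj
    rw [hg j hj]
    exact mul_pos (hε0 j) (hbpos (j - 1))
  have hgap : ∀ j, 1 ≤ j → A j - B (j + 1) = (1 - ε (j + 1)) / 2 * b j := by
    intro j hj
    rw [hB (j + 1) (by omega), hA (j + 1) (by omega), hA j hj,
        hb (j + 1) (by omega), hg (j + 1) (by omega)]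
    simp only [Nat.add_sub_cancel]
    ring
  have hAleB : ∀ j, 1 ≤ j → A j ≤ B j := by
    intro j hj
    rw [hB j hj]; linarith [hgpos j hj]
  have hBA : ∀ j, 1 ≤ j → B (j + 1) < A j := by
    intro j hj
    have h := hgap j hj
    have h1 : 0 < 1 - ε (j + 1) := by linarith [hε1 (j + 1)]
    have h2 := hbpos j
    nlinarith
  have hBdec : ∀ m n, 1 ≤ m → m ≤ n → B n ≤ B m := by
    intro m n hm hmn
    induction n with
    | zero => omega
    | succ p ih =>
      rcases Nat.lt_or_ge m (p + 1) with h | h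
      · have hp : 1 ≤ p := by omega
        have h1 := hBA p hp
        have h2 := hAleB p hp
        have h3 := ih (by omega)
        linarith
      · have : m = p + 1 := by omega
        rw [this]
  have hcle : ∀ j, 1 ≤ j → c ≤ (1 - ε j) * (1 - ε (j + 1)) := by
    intro j hj
    have hbdd : BddBelow (Set.range fun i : ℕ => (1 - ε (i + 1)) * (1 - ε (i + 2))) := by
      refine ⟨0, ?_⟩
      rintro y ⟨i, rfl⟩
      have h1 := hε1 (i + 1); have h2 := hε1 (i + 2)
      show (0:ℝ) ≤ (1 - ε (i + 1)) * (1 - ε (i + 2))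
      nlinarith
    have e1 : j - 1 + 1 = j := Nat.sub_add_cancel hj
    have e2 : j - 1 + 2 = j + 1 := by omega
    rw [hc]
    have := ciInf_le hbdd (j - 1)
    simpa [e1, e2] using this
  intro k hk x hx
  have key : ∀ j ∈ Finset.Icc 1 (k - 1),
      |x - γ j| / Real.sqrt (|x - A j| * |x - B j|) ≤ Real.exp (2 / c * ε j) := by
    intro j hj
    rw [Finset.mem_Icc] at hj
    obtain ⟨hj1, hjk⟩ := hj
    have hjk' : j + 1 ≤ k := by omega
    have hxB : x ≤ B (j + 1) := le_trans hx (hBdec (j + 1) k (by omega) hjk')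
    set d := (1 - ε (j + 1)) / 2 * b j with hd
    have hdpos : 0 < d := by
      have h1 : 0 < 1 - ε (j + 1) := by linarith [hε1 (j + 1)]
      have h2 := hbpos j
      rw [hd]; positivity
    have hAx : d ≤ A j - x := by
      have := hgap j hj1; linarith
    have hAxpos : 0 < A j - x := lt_of_lt_of_le hdpos hAx
    have hγA := (hγ j hj1).1
    have hγB := (hγ j hj1).2
    have hBx : 0 < B j - x := by
      have := hAleB j hj1; linarith
    have hab1 : |x - γ j| = γ j - x := by
      rw [abs_sub_comm, abs_of_pos (by linarith)]
    have hab2 : |x - A j| = A j - x := by rw [abs_sub_comm, abs_of_pos hAxpos]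
    have hab3 : |x - B j| = B j - x := by rw [abs_sub_comm, abs_of_pos hBx]
    rw [hab1, hab2, hab3]
    set u := A j - x with hu
    set v := B j - x with hv
    have hsu : (0:ℝ) < Real.sqrt u := Real.sqrt_pos.mpr hAxpos
    have hsv : (0:ℝ) < Real.sqrt v := Real.sqrt_pos.mpr hBx
    have step1 : (γ j - x) / Real.sqrt (u * v) ≤ Real.sqrt (v / u) := by
      rw [Real.sqrt_mul hAxpos.le, Real.sqrt_div hBx.le]
      have h1 : (γ j - x) / (Real.sqrt u * Real.sqrt v) ≤ v / (Real.sqrt u * Real.sqrt v) := by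
        apply div_le_div_of_nonneg_right ?_ (by positivity)
        · linarith
      refine h1.trans (le_of_eq ?_)
      rw [div_eq_div_iff (by positivity) hsu.ne']
      linear_combination (-Real.sqrt u) * Real.mul_self_sqrt hBx.le
    have hvu : v = u + g j := by
      rw [hu, hv, hB j hj1]; ring
    have hgd : g j / d ≤ 4 * ε j / c := by
      have hbj : b j = (1 - ε j) / 2 * b (j - 1) := hb j hj1
      have hgj : g j = ε j * b (j - 1) := hg j hj1
      have hP : 0 < (1 - ε j) * (1 - ε (j + 1)) := by
        nlinarith [hε1 j, hε1 (j + 1)]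
      have hcP := hcle j hj1
      have hbm := hbpos (j - 1)
      have hdeq : d = (1 - ε j) * (1 - ε (j + 1)) / 4 * b (j - 1) := by
        rw [hd, hbj]; ring
      rw [hgj, hdeq]
      rw [div_le_div_iff₀ (by positivity) hc0]
      have hεj := hε0 j
      nlinarith [mul_pos hεj hbm]
    have hgu : g j / u ≤ g j / d :=
      div_le_div_of_nonneg_left (hgpos j hj1).le hdpos hAx
    have hratio : v / u ≤ 1 + 4 * ε j / c := by
      rw [hvu, add_div, div_self hAxpos.ne']
      have := hgu.trans hgd
      linarith
    have step2 : Real.sqrt (v / u) ≤ Real.exp (2 / c * ε j) := by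
      have h1 : v / u ≤ Real.exp (4 * ε j / c) := by
        have := Real.add_one_le_exp (4 * ε j / c)
        linarith
      have h2 : Real.sqrt (v / u) ≤ Real.sqrt (Real.exp (4 * ε j / c)) :=
        Real.sqrt_le_sqrt h1
      have h3 : Real.sqrt (Real.exp (4 * ε j / c)) = Real.exp (4 * ε j / c / 2) :=
        (Real.exp_half _).symm
      rw [h3] at h2
      have h4 : 4 * ε j / c / 2 = 2 / c * ε j := by ring
      rwa [h4] at h2
    exact step1.trans step2
  calc ∏ j ∈ Finset.Icc 1 (k - 1), |x - γ j| / Real.sqrt (|x - A j| * |x - B j|)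
      ≤ ∏ j ∈ Finset.Icc 1 (k - 1), Real.exp (2 / c * ε j) := by
        apply Finset.prod_le_prod
        · intro j _; positivity
        · exact key
    _ = Real.exp (∑ j ∈ Finset.Icc 1 (k - 1), 2 / c * ε j) := (Real.exp_sum _ _).symm
    _ = Real.exp (2 / c * ∑ j ∈ Finset.Icc 1 (k - 1), ε j) := by rw [Finset.mul_sum]
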